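/- Let M be a q-matroid of rank one on E = F_q^n with loop space L of dimension t, where 0 < t < n-1 (i.e., ρ(U) = 0 if U ⊆ L and ρ(U) = 1 otherwise). Then there is no F_q-linear rank-metric code C ⊆ F_q^{n×m} with 1 < m < n - t representing M. -/

import Mathlib

open Matrix

variable {F : Type*} [Field F]

/-- Column space of a matrix: the span of its columns. -/
def colSpace {n m : ℕ} (M : Matrix (Fin n) (Fin m) F) : Submodule F (Fin n → F) :=
  Submodule.span F (Set.range Mᵀ)

lemma colSpace_le_iff {n m : ℕ} (M : Matrix (Fin n) (Fin m) F) (U : Submodule F (Fin n → F)) :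
    colSpace M ≤ U ↔ ∀ j, Mᵀ j ∈ U := by
  rw [colSpace, Submodule.span_le]
  constructor
  · intro h j; exact h ⟨j, rfl⟩
  · rintro h _ ⟨j, rfl⟩; exact h j

/-- `C(U)`: the codewords of `C` whose column space is contained in `U`. -/
def codeCU {n m : ℕ} (C : Submodule F (Matrix (Fin n) (Fin m) F))
    (U : Submodule F (Fin n → F)) : Submodule F (Matrix (Fin n) (Fin m) F) where
  carrier := {M | M ∈ C ∧ colSpace M ≤ U}
  add_mem' := by
    rintro a b ⟨haC, ha⟩ ⟨hbC, hb⟩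
    refine ⟨C.add_mem haC hbC, (colSpace_le_iff _ _).2 fun j => ?_⟩
    have h := U.add_mem ((colSpace_le_iff a U).1 ha j) ((colSpace_le_iff b U).1 hb j)
    simp only [Matrix.transpose_add]; exact h
  zero_mem' := by
    exact ⟨C.zero_mem, (colSpace_le_iff _ _).2 fun j => U.zero_mem⟩
  smul_mem' := by
    rintro c a ⟨haC, ha⟩
    refine ⟨C.smul_mem c haC, (colSpace_le_iff _ _).2 fun j => ?_⟩
    have h := U.smul_mem c ((colSpace_le_iff a U).1 ha j)
    simp only [Matrix.transpose_smul]; exact h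

/-- Orthogonal complement with respect to the standard (dot-product) bilinear form. -/
def perp {n : ℕ} (U : Submodule F (Fin n → F)) : Submodule F (Fin n → F) where
  carrier := {v | ∀ u ∈ U, v ⬝ᵥ u = 0}
  add_mem' := by
    intro a b ha hb u hu
    rw [add_dotProduct, ha u hu, hb u hu, add_zero]
  zero_mem' := by
    intro u hu
    rw [zero_dotProduct]
  smul_mem' := by
    intro c a ha u hu
    rw [smul_dotProduct, ha u hu, smul_zero]

/-- The minimum rank distance of a matrix code. -/
noncomputable def minRankDist {n m : ℕ} (C : Submodule F (Matrix (Fin n) (Fin m) F)) : ℕ :=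
  sInf {r : ℕ | ∃ M ∈ C, M ≠ 0 ∧ M.rank = r}

/-- The rank function of the q-polymatroid associated to a matrix rank-metric code. -/
noncomputable def rhoCode {n m : ℕ} (C : Submodule F (Matrix (Fin n) (Fin m) F))
    (U : Submodule F (Fin n → F)) : ℚ :=
  ((Module.finrank F C : ℚ) - (Module.finrank F (codeCU C (perp U)) : ℚ)) / (m : ℚ)

section Aux
open Matrix
variable {F : Type*} [Field F]

lemma perp_top_eq_bot {n : ℕ} : perp (⊤ : Submodule F (Fin n → F)) = ⊥ := by
  ext v
  simp only [Submodule.mem_bot]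
  constructor
  · intro hv
    funext i
    have := hv (Pi.single i 1) trivial
    classical
    rwa [dotProduct_single, mul_one] at this
  · rintro rfl u _
    exact zero_dotProduct u

lemma codeCU_bot {n m : ℕ} (C : Submodule F (Matrix (Fin n) (Fin m) F)) :
    codeCU C (⊥ : Submodule F (Fin n → F)) = ⊥ := by
  ext M
  simp only [Submodule.mem_bot]
  constructor
  · rintro ⟨-, h⟩
    have h' := (colSpace_le_iff M ⊥).1 h
    have : Mᵀ = 0 := funext fun j => by exact (Submodule.mem_bot F).1 (h' j)
    calc M = Mᵀᵀ := (transpose_transpose M).symm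
    _ = 0 := by rw [this]; simp
  · rintro rfl
    exact (codeCU C ⊥).zero_mem

lemma perp_colSpace_eq_ker {n m : ℕ} (M : Matrix (Fin n) (Fin m) F) :
    perp (colSpace M) = LinearMap.ker (Mᵀ.mulVecLin) := by
  ext v
  constructor
  · intro hv
    simp only [LinearMap.mem_ker, mulVecLin_apply]
    funext j
    have : v ⬝ᵥ Mᵀ j = 0 := hv (Mᵀ j) (Submodule.subset_span ⟨j, rfl⟩)
    exact (dotProduct_comm _ _).trans this
  · intro hv u hu
    simp only [LinearMap.mem_ker, mulVecLin_apply] at hv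
    induction hu using Submodule.span_induction with
    | mem x hx =>
      obtain ⟨j, rfl⟩ := hx
      have : Mᵀ *ᵥ v = 0 := hv
      have hj := congrFun this j
      exact (dotProduct_comm _ _).trans hj
    | zero => simp
    | add x y _ _ hx hy => rw [dotProduct_add, hx, hy, add_zero]
    | smul c x _ hx => rw [dotProduct_smul, hx, smul_zero]

lemma colSpace_le_perp_perp {n m : ℕ} (M : Matrix (Fin n) (Fin m) F) :
    colSpace M ≤ perp (perp (colSpace M)) := by
  intro v hv u hu
  rw [dotProduct_comm]
  exact hu v hv

end Aux

open scoped Classical in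
/-- a rank-one q-matroid with loop space of dimension `t`, `0 < t < n-1`,
admits no representation by a matrix rank-metric code with `1 < m < n - t`. -/
theorem rank_one_not_representable [Fintype F] {n t : ℕ}
    (L : Submodule F (Fin n → F)) (hL : Module.finrank F L = t)
    (ht0 : 0 < t) (ht : t < n - 1)
    (m : ℕ) (hm1 : 1 < m) (hm2 : m < n - t) :
    ¬ ∃ C : Submodule F (Matrix (Fin n) (Fin m) F),
        ∀ U : Submodule F (Fin n → F),
          rhoCode C U = if U ≤ L then (0 : ℚ) else 1 := by
  rintro ⟨C, hC⟩
  have hn2 : 2 ≤ n := by omega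
  -- ⊤ is not contained in L
  have hTop : ¬ (⊤ : Submodule F (Fin n → F)) ≤ L := by
    intro h
    have : Module.finrank F (⊤ : Submodule F (Fin n → F)) ≤ Module.finrank F L :=
      Submodule.finrank_mono h
    rw [finrank_top, Module.finrank_fin_fun, hL] at this
    omega
  have h1 := hC ⊤
  rw [if_neg hTop, rhoCode, perp_top_eq_bot, codeCU_bot] at h1
  have hmQ : (m : ℚ) ≠ 0 := by exact_mod_cast (by omega : m ≠ 0)
  have hdimC : (Module.finrank F C : ℚ) = m := by
    field_simp at h1
    simpa using h1
  have hdimC' : Module.finrank F C = m := by exact_mod_cast hdimC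
  -- C is nonzero
  have hCbot : C ≠ ⊥ := by
    intro h
    rw [h, finrank_bot] at hdimC'
    omega
  obtain ⟨M, hMC, hM0⟩ := Submodule.exists_mem_ne_zero_of_ne_bot hCbot
  set U : Submodule F (Fin n → F) := perp (colSpace M) with hU
  have hMcode : M ∈ codeCU C (perp U) := ⟨hMC, colSpace_le_perp_perp M⟩
  by_cases hUL : U ≤ L
  · -- dim U = n - rank M, dim U ≤ t, rank M ≤ m < n - t : contradiction
    have hUker : U = LinearMap.ker (Mᵀ.mulVecLin) := perp_colSpace_eq_ker M
    have hrn := LinearMap.finrank_range_add_finrank_ker (Mᵀ.mulVecLin)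
    have hdom : Module.finrank F (Fin n → F) = n := Module.finrank_fin_fun F
    rw [hdom] at hrn
    have hrk : Module.finrank F (LinearMap.range (Mᵀ.mulVecLin)) = M.rank := by
      rw [← Matrix.rank_transpose M]; rfl
    rw [hrk] at hrn
    have hUle : Module.finrank F U ≤ t := by rw [← hL]; exact Submodule.finrank_mono hUL
    rw [hUker] at hUle
    have hMrank : M.rank ≤ m := Matrix.rank_le_width M
    omega
  · have h2 := hC U
    rw [if_neg hUL, rhoCode] at h2
    have : (Module.finrank F (codeCU C (perp U)) : ℚ) = 0 := by
      rw [div_eq_one_iff_eq hmQ, hdimC] at h2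
      linarith only [h2]
    have hz : Module.finrank F (codeCU C (perp U)) = 0 := by exact_mod_cast this
    rw [Submodule.finrank_eq_zero] at hz
    rw [hz] at hMcode
    exact hM0 (Submodule.mem_bot F |>.1 hMcode)
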